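/- Let E and F be independent exponentially distributed random variables, each with mean 1. Then lim_{t → 0⁺} Pr[ E·F < t ] / ( t · ln(1/t) ) = 1. -/

import Mathlib

open MeasureTheory ProbabilityTheory Real Set Filter

namespace OutageAux

lemma expMeasure_one_Iic (a : ℝ) :
    expMeasure 1 (Iic a) = ENNReal.ofReal (if 0 ≤ a then 1 - Real.exp (-a) else 0) := by
  have h : expMeasure 1 (Iic a) = ∫⁻ y in Iic a, exponentialPDF 1 y := by
    rw [expMeasure, gammaMeasure, withDensity_apply _ measurableSet_Iic]
    rfl
  rw [h, lintegral_exponentialPDF_eq_antiDeriv one_pos]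
  simp

lemma expMeasure_one_singleton (a : ℝ) : expMeasure 1 {a} = 0 := by
  rw [expMeasure, gammaMeasure]
  exact withDensity_absolutelyContinuous volume _ (Real.volume_singleton)

lemma expMeasure_one_Iio (a : ℝ) :
    expMeasure 1 (Iio a) = ENNReal.ofReal (if 0 ≤ a then 1 - Real.exp (-a) else 0) := by
  rw [← expMeasure_one_Iic]
  refine le_antisymm (measure_mono Iio_subset_Iic_self) ?_
  calc expMeasure 1 (Iic a) ≤ expMeasure 1 (Iio a ∪ {a}) := by
        refine measure_mono fun x hx => ?_
        have hx' : x ≤ a := hx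
        rcases lt_or_eq_of_le hx' with h | h
        · exact Or.inl h
        · exact Or.inr h
    _ ≤ expMeasure 1 (Iio a) + expMeasure 1 {a} := measure_union_le _ _
    _ = expMeasure 1 (Iio a) := by rw [expMeasure_one_singleton, add_zero]

lemma exp_neg_le_quadratic {u : ℝ} (hu : 0 ≤ u) : Real.exp (-u) ≤ 1 - u + u ^ 2 := by
  have h1 : Real.exp (-u) * Real.exp u = 1 := by rw [← Real.exp_add]; simp
  have h2 := Real.add_one_le_exp u
  have h3 := Real.exp_pos (-u)
  nlinarith [mul_le_mul_of_nonneg_left h2 h3.le, mul_nonneg hu (mul_nonneg hu hu)]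

/-- The key identity: the probability that the product of two independent
exponential(1) random variables is below `t`, as an explicit Lebesgue integral. -/
lemma prod_mul_lt (t : ℝ) (ht : 0 < t) :
    ((expMeasure 1).prod (expMeasure 1)) {p : ℝ × ℝ | p.1 * p.2 < t}
      = ∫⁻ x in Ioi (0 : ℝ),
          ENNReal.ofReal ((1 - Real.exp (-(t / x))) * Real.exp (-x)) := by
  haveI : IsProbabilityMeasure (expMeasure 1) := isProbabilityMeasure_expMeasure one_pos
  have hs : MeasurableSet {p : ℝ × ℝ | p.1 * p.2 < t} :=
    measurableSet_lt (measurable_fst.mul measurable_snd) measurable_const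
  rw [Measure.prod_apply hs]
  have hnull : expMeasure 1 (Iic (0 : ℝ)) = 0 := by
    rw [expMeasure_one_Iic]; simp
  have huniv : (Ioi (0:ℝ)) =ᵐ[expMeasure 1] (univ : Set ℝ) := by
    rw [ae_eq_univ, compl_Ioi]; exact hnull
  rw [← setLIntegral_univ, setLIntegral_congr huniv.symm]
  have hcongr : ∀ x ∈ Ioi (0:ℝ),
      expMeasure 1 (Prod.mk x ⁻¹' {p : ℝ × ℝ | p.1 * p.2 < t})
        = ENNReal.ofReal (1 - Real.exp (-(t / x))) := by
    intro x hx
    have hx0 : (0:ℝ) < x := hx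
    have hset : Prod.mk x ⁻¹' {p : ℝ × ℝ | p.1 * p.2 < t} = Iio (t / x) := by
      ext y
      simp only [mem_preimage, mem_setOf_eq, mem_Iio]
      rw [lt_div_iff₀ hx0, mul_comm]
    rw [hset, expMeasure_one_Iio, if_pos (div_nonneg ht.le hx0.le)]
  rw [setLIntegral_congr_fun_ae measurableSet_Ioi (ae_of_all _ hcongr)]
  have hexp : expMeasure 1 = volume.withDensity (exponentialPDF 1) := rfl
  have hmeasf : Measurable fun x : ℝ => ENNReal.ofReal (1 - Real.exp (-(t / x))) := by
    fun_prop
  have hmeaspdf : Measurable (exponentialPDF 1) := by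
    exact (measurable_exponentialPDFReal 1).ennreal_ofReal
  rw [hexp, restrict_withDensity measurableSet_Ioi,
    lintegral_withDensity_eq_lintegral_mul _ hmeaspdf hmeasf]
  refine setLIntegral_congr_fun_ae measurableSet_Ioi (ae_of_all _ fun x hx => ?_)
  have hx0 : (0:ℝ) < x := hx
  simp only [Pi.mul_apply]
  rw [exponentialPDF_of_nonneg hx0.le, one_mul,
    ← ENNReal.ofReal_mul (Real.exp_pos _).le]
  norm_num [mul_comm]


lemma integrableOn_h (t a b : ℝ) (ha : 0 < a) :
    IntegrableOn (fun x : ℝ => (1 - Real.exp (-(t / x))) * Real.exp (-x)) (Ioc a b) := by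
  have hcont : ContinuousOn (fun x : ℝ => (1 - Real.exp (-(t / x))) * Real.exp (-x)) (Icc a b) := by
    have hne : ∀ x ∈ Icc a b, x ≠ 0 := fun x hx => (lt_of_lt_of_le ha hx.1).ne'
    exact ((continuousOn_const.sub
      (((continuousOn_const.div continuousOn_id hne).neg).rexp)).mul
      ((Real.continuous_exp.comp continuous_neg).continuousOn))
  exact (hcont.integrableOn_Icc).mono_set Ioc_subset_Icc_self

lemma lower_bound (t : ℝ) (ht : 0 < t) (ht1 : t < 1) :
    ENNReal.ofReal (t * Real.log (1 / t) - 2 * t)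
      ≤ ∫⁻ x in Ioi (0 : ℝ),
          ENNReal.ofReal ((1 - Real.exp (-(t / x))) * Real.exp (-x)) := by
  set g : ℝ → ℝ := fun x => t * x⁻¹ - t + t ^ 2 * -(x ^ 2)⁻¹ with hg
  set h : ℝ → ℝ := fun x => (1 - Real.exp (-(t / x))) * Real.exp (-x) with hh
  have hne : ∀ x ∈ Icc t 1, x ≠ 0 := fun x hx => (lt_of_lt_of_le ht hx.1).ne'
  -- integral of g over Ioc t 1
  have hgcont : ContinuousOn g (Icc t 1) := by
    refine ((continuousOn_const.mul (continuousOn_id.inv₀ hne)).sub continuousOn_const).add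
      (continuousOn_const.mul ?_)
    exact (((continuousOn_id.pow 2).inv₀ fun x hx => pow_ne_zero 2 (hne x hx)).neg)
  have hgint : IntegrableOn g (Ioc t 1) := (hgcont.integrableOn_Icc).mono_set Ioc_subset_Icc_self
  have hhint : IntegrableOn h (Ioc t 1) := integrableOn_h t t 1 ht
  have hIg : ∫ x in Ioc t 1, g x = t * Real.log (1 / t) - 2 * t + 2 * t ^ 2 := by
    rw [← intervalIntegral.integral_of_le ht1.le]
    have hftc : ∀ x ∈ uIcc t 1, HasDerivAt
        (fun x : ℝ => t * Real.log x - t * x + t ^ 2 * x⁻¹) (g x) x := by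
      intro x hx
      rw [uIcc_of_le ht1.le] at hx
      have hx0 : x ≠ 0 := hne x hx
      have hd := (((Real.hasDerivAt_log hx0).const_mul t).sub
        ((hasDerivAt_id x).const_mul t)).add ((hasDerivAt_inv hx0).const_mul (t ^ 2))
      refine hd.congr_deriv ?_
      simp [hg]
    have hgi : IntervalIntegrable g volume t 1 := by
      rw [intervalIntegrable_iff, uIoc_of_le ht1.le]
      exact hgint
    rw [intervalIntegral.integral_eq_sub_of_hasDerivAt hftc hgi]
    have ht0 : t ≠ 0 := ht.ne'
    rw [one_div, Real.log_inv, Real.log_one]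
    field_simp
    ring
  have hpt : ∀ x ∈ Ioc t 1, g x ≤ h x := by
    intro x hx
    have hx0 : (0:ℝ) < x := lt_trans ht hx.1
    have hxt : t < x := hx.1
    have hx1 : x ≤ 1 := hx.2
    have hu0 : 0 ≤ t / x := div_nonneg ht.le hx0.le
    have hu1 : t / x ≤ 1 := (div_le_one hx0).2 hxt.le
    have ha : 0 ≤ t / x - (t / x) ^ 2 := by nlinarith
    have key2 : 1 - x ≤ Real.exp (-x) := by nlinarith [Real.add_one_le_exp (-x)]
    have s1 : g x ≤ (t / x - (t / x) ^ 2) * (1 - x) := by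
      have hxne : x ≠ 0 := hx0.ne'
      have hkey : (t / x - (t / x) ^ 2) * (1 - x)
          - (t * x⁻¹ - t + t ^ 2 * -(x ^ 2)⁻¹) = t ^ 2 / x := by
        field_simp
        ring
      have : 0 ≤ t ^ 2 / x := div_nonneg (sq_nonneg t) hx0.le
      simp only [hg]
      linarith
    have s2 : (t / x - (t / x) ^ 2) * (1 - x) ≤ (t / x - (t / x) ^ 2) * Real.exp (-x) :=
      mul_le_mul_of_nonneg_left key2 ha
    have s3 : (t / x - (t / x) ^ 2) * Real.exp (-x) ≤ h x := by
      refine mul_le_mul_of_nonneg_right ?_ (Real.exp_pos _).le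
      have := exp_neg_le_quadratic hu0
      nlinarith
    exact le_trans s1 (le_trans s2 s3)
  have hIle : ∫ x in Ioc t 1, g x ≤ ∫ x in Ioc t 1, h x :=
    setIntegral_mono_on hgint hhint measurableSet_Ioc hpt
  have hnn : 0 ≤ᵐ[volume.restrict (Ioc t 1)] h := by
    refine (ae_restrict_iff' measurableSet_Ioc).2 (ae_of_all _ fun x hx => ?_)
    have hx0 : (0:ℝ) < x := lt_trans ht hx.1
    have : Real.exp (-(t / x)) ≤ 1 := by
      rw [Real.exp_le_one_iff]
      simp [div_nonneg ht.le hx0.le]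
    show 0 ≤ (1 - Real.exp (-(t / x))) * Real.exp (-x)
    exact mul_nonneg (by linarith) (Real.exp_pos _).le
  calc ENNReal.ofReal (t * Real.log (1 / t) - 2 * t)
      ≤ ENNReal.ofReal (∫ x in Ioc t 1, h x) := by
        refine ENNReal.ofReal_le_ofReal ?_
        have : 0 ≤ 2 * t ^ 2 := by positivity
        linarith [hIle, hIg.symm.le]
    _ = ∫⁻ x in Ioc t 1, ENNReal.ofReal (h x) :=
        ofReal_integral_eq_lintegral_ofReal hhint hnn
    _ ≤ ∫⁻ x in Ioi (0:ℝ), ENNReal.ofReal (h x) :=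
        lintegral_mono_set (fun x hx => lt_trans ht hx.1)


lemma upper_bound (t : ℝ) (ht : 0 < t) (ht1 : t < 1) :
    (∫⁻ x in Ioi (0 : ℝ),
        ENNReal.ofReal ((1 - Real.exp (-(t / x))) * Real.exp (-x)))
      ≤ ENNReal.ofReal (t * Real.log (1 / t) + 2 * t) := by
  set h : ℝ → ℝ := fun x => (1 - Real.exp (-(t / x))) * Real.exp (-x) with hh
  have hsplit : Ioi (0:ℝ) = Ioc 0 t ∪ (Ioc t 1 ∪ Ioi 1) := by
    rw [Ioc_union_Ioi_eq_Ioi ht1.le, Ioc_union_Ioi_eq_Ioi ht.le]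
  have hd1 : Disjoint (Ioc t (1:ℝ)) (Ioi 1) := by
    rw [Set.disjoint_left]; rintro x ⟨_, h2⟩ h3; exact absurd h3 (not_lt.2 h2)
  have hd2 : Disjoint (Ioc (0:ℝ) t) (Ioc t 1 ∪ Ioi 1) := by
    rw [Ioc_union_Ioi_eq_Ioi ht1.le, Set.disjoint_left]
    rintro x ⟨_, h2⟩ h3; exact absurd h3 (not_lt.2 h2)
  rw [hsplit, lintegral_union ((measurableSet_Ioc.union measurableSet_Ioi)) hd2,
    lintegral_union measurableSet_Ioi hd1]
  -- bound on (0, t]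
  have hB1 : (∫⁻ x in Ioc (0:ℝ) t, ENNReal.ofReal (h x)) ≤ ENNReal.ofReal t := by
    have hb : ∀ x ∈ Ioc (0:ℝ) t, ENNReal.ofReal (h x) ≤ 1 := by
      intro x hx
      refine ENNReal.ofReal_le_one.2 ?_
      have he1 : Real.exp (-x) ≤ 1 := by
        rw [Real.exp_le_one_iff]; linarith [hx.1]
      have he2 : 0 < Real.exp (-(t / x)) := Real.exp_pos _
      have he3 : 0 ≤ Real.exp (-x) := (Real.exp_pos _).le
      show (1 - Real.exp (-(t / x))) * Real.exp (-x) ≤ 1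
      nlinarith
    calc (∫⁻ x in Ioc (0:ℝ) t, ENNReal.ofReal (h x))
        ≤ ∫⁻ _ in Ioc (0:ℝ) t, 1 := setLIntegral_mono measurable_const hb
      _ = ENNReal.ofReal t := by
          rw [setLIntegral_one, Real.volume_Ioc, sub_zero]
  -- bound on (t, 1]
  have hB2 : (∫⁻ x in Ioc t 1, ENNReal.ofReal (h x))
      ≤ ENNReal.ofReal (t * Real.log (1 / t)) := by
    have hb : ∀ x ∈ Ioc t (1:ℝ), ENNReal.ofReal (h x) ≤ ENNReal.ofReal (t / x) := by
      intro x hx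
      refine ENNReal.ofReal_le_ofReal ?_
      have hx0 : (0:ℝ) < x := lt_trans ht hx.1
      have he1 : Real.exp (-x) ≤ 1 := by
        rw [Real.exp_le_one_iff]; linarith
      have he2 : 1 - t / x ≤ Real.exp (-(t / x)) := by
        nlinarith [Real.add_one_le_exp (-(t / x))]
      have he3 : Real.exp (-(t / x)) ≤ 1 := by
        rw [Real.exp_le_one_iff]
        simp [div_nonneg ht.le hx0.le]
      have he4 : 0 ≤ Real.exp (-x) := (Real.exp_pos _).le
      show (1 - Real.exp (-(t / x))) * Real.exp (-x) ≤ t / x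
      nlinarith
    have hint : IntegrableOn (fun x : ℝ => t / x) (Ioc t 1) := by
      have hne : ∀ x ∈ Icc t 1, x ≠ 0 := fun x hx => (lt_of_lt_of_le ht hx.1).ne'
      exact ((continuousOn_const.div continuousOn_id hne).integrableOn_Icc).mono_set
        Ioc_subset_Icc_self
    have hi : ∫ x in Ioc t 1, t / x = t * Real.log (1 / t) := by
      rw [← intervalIntegral.integral_of_le ht1.le]
      simp_rw [div_eq_mul_inv]
      rw [intervalIntegral.integral_const_mul, integral_inv_of_pos ht one_pos]
      norm_num
    calc (∫⁻ x in Ioc t 1, ENNReal.ofReal (h x))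
        ≤ ∫⁻ x in Ioc t 1, ENNReal.ofReal (t / x) := setLIntegral_mono (by fun_prop) hb
      _ = ENNReal.ofReal (∫ x in Ioc t 1, t / x) := by
          rw [ofReal_integral_eq_lintegral_ofReal hint]
          refine (ae_restrict_iff' measurableSet_Ioc).2 (ae_of_all _ fun x hx => ?_)
          exact div_nonneg ht.le (lt_trans ht hx.1).le
      _ = ENNReal.ofReal (t * Real.log (1 / t)) := by rw [hi]
  -- bound on (1, ∞)
  have hB3 : (∫⁻ x in Ioi (1:ℝ), ENNReal.ofReal (h x)) ≤ ENNReal.ofReal t := by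
    have hb : ∀ x ∈ Ioi (1:ℝ), ENNReal.ofReal (h x) ≤ ENNReal.ofReal (t * Real.exp (-x)) := by
      intro x hx
      refine ENNReal.ofReal_le_ofReal ?_
      have hx1 : (1:ℝ) < x := hx
      have hx0 : (0:ℝ) < x := lt_trans one_pos hx1
      have he2 : 1 - t / x ≤ Real.exp (-(t / x)) := by
        nlinarith [Real.add_one_le_exp (-(t / x))]
      have htx : t / x ≤ t := div_le_self ht.le hx1.le
      show (1 - Real.exp (-(t / x))) * Real.exp (-x) ≤ t * Real.exp (-x)
      refine mul_le_mul_of_nonneg_right (by linarith) (Real.exp_pos _).le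
    have hint : IntegrableOn (fun x : ℝ => t * Real.exp (-x)) (Ioi 1) := by
      have := (exp_neg_integrableOn_Ioi 1 one_pos).const_mul t
      simpa [IntegrableOn] using this
    have hi : ∫ x in Ioi (1:ℝ), t * Real.exp (-x) = t * Real.exp (-1) := by
      rw [integral_const_mul, integral_exp_neg_Ioi]
    calc (∫⁻ x in Ioi (1:ℝ), ENNReal.ofReal (h x))
        ≤ ∫⁻ x in Ioi (1:ℝ), ENNReal.ofReal (t * Real.exp (-x)) :=
          setLIntegral_mono (by fun_prop) hb
      _ = ENNReal.ofReal (t * Real.exp (-1)) := by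
          rw [← ofReal_integral_eq_lintegral_ofReal hint
            (ae_of_all _ fun x => mul_nonneg ht.le (Real.exp_pos _).le), hi]
      _ ≤ ENNReal.ofReal t := by
          refine ENNReal.ofReal_le_ofReal ?_
          nlinarith [Real.exp_le_one_iff.2 (by norm_num : (-1:ℝ) ≤ 0)]
  have hlog : 0 ≤ t * Real.log (1 / t) :=
    mul_nonneg ht.le (Real.log_nonneg ((le_div_iff₀ ht).2 (by linarith)))
  calc (∫⁻ x in Ioc (0:ℝ) t, ENNReal.ofReal (h x))
        + ((∫⁻ x in Ioc t 1, ENNReal.ofReal (h x)) + ∫⁻ x in Ioi 1, ENNReal.ofReal (h x))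
      ≤ ENNReal.ofReal t + (ENNReal.ofReal (t * Real.log (1 / t)) + ENNReal.ofReal t) :=
        add_le_add hB1 (add_le_add hB2 hB3)
    _ = ENNReal.ofReal (t + (t * Real.log (1 / t) + t)) := by
        rw [← ENNReal.ofReal_add hlog ht.le, ← ENNReal.ofReal_add ht.le (by linarith)]
    _ ≤ ENNReal.ofReal (t * Real.log (1 / t) + 2 * t) := by
        refine ENNReal.ofReal_le_ofReal (by linarith)

end OutageAux

/-- Let `E` and `F` be independent exponentially distributed random variables,
each with mean 1.  Then `Pr[E·F < t] / (t·ln(1/t)) → 1` as `t → 0⁺`; i.e., the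
minimum outage probability of the ideal save-then-transmit system decays like
`ln(γ̄)/γ̄` rather than `1/γ̄`. -/
theorem outage_prob_asymptotic {Ω : Type*} [MeasurableSpace Ω]
    (μ : Measure Ω) [IsProbabilityMeasure μ] (E F : Ω → ℝ)
    (hE : Measurable E) (hF : Measurable F) (hindep : IndepFun E F μ)
    (hElaw : Measure.map E μ = expMeasure 1)
    (hFlaw : Measure.map F μ = expMeasure 1) :
    Filter.Tendsto
      (fun t : ℝ => (μ {ω | E ω * F ω < t}).toReal / (t * Real.log (1 / t)))
      (nhdsWithin (0 : ℝ) (Set.Ioi 0)) (nhds 1) := by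
  haveI : IsProbabilityMeasure (expMeasure 1) := isProbabilityMeasure_expMeasure one_pos
  have hs : ∀ t : ℝ, MeasurableSet {p : ℝ × ℝ | p.1 * p.2 < t} := fun t =>
    measurableSet_lt (measurable_fst.mul measurable_snd) measurable_const
  have hmap : μ.map (fun ω => (E ω, F ω)) = (expMeasure 1).prod (expMeasure 1) := by
    have h := (ProbabilityTheory.indepFun_iff_map_prod_eq_prod_map_map
      hE.aemeasurable hF.aemeasurable).mp hindep
    rw [hElaw, hFlaw] at h
    exact h
  have hQ : ∀ t : ℝ, 0 < t → μ {ω | E ω * F ω < t}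
      = ∫⁻ x in Ioi (0:ℝ), ENNReal.ofReal ((1 - Real.exp (-(t / x))) * Real.exp (-x)) := by
    intro t ht
    have hpre : {ω | E ω * F ω < t}
        = (fun ω => (E ω, F ω)) ⁻¹' {p : ℝ × ℝ | p.1 * p.2 < t} := rfl
    rw [hpre, ← Measure.map_apply (hE.prodMk hF) (hs t), hmap, OutageAux.prod_mul_lt t ht]
  have hbound : ∀ t ∈ Ioo (0:ℝ) 1,
      |(μ {ω | E ω * F ω < t}).toReal - t * Real.log (1 / t)| ≤ 2 * t := by
    intro t ht
    have hub := OutageAux.upper_bound t ht.1 ht.2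
    have hlb := OutageAux.lower_bound t ht.1 ht.2
    rw [← hQ t ht.1] at hub hlb
    have hlogpos : 0 < Real.log (1 / t) := Real.log_pos (one_lt_one_div ht.1 ht.2)
    have h1 : (μ {ω | E ω * F ω < t}).toReal ≤ t * Real.log (1 / t) + 2 * t :=
      ENNReal.toReal_le_of_le_ofReal (by nlinarith [mul_pos ht.1 hlogpos]) hub
    have hne : μ {ω | E ω * F ω < t} ≠ ⊤ := measure_ne_top μ _
    have h2 : t * Real.log (1 / t) - 2 * t ≤ (μ {ω | E ω * F ω < t}).toReal :=
      (ENNReal.ofReal_le_iff_le_toReal hne).1 hlb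
    rw [abs_le]
    constructor <;> linarith
  have hlog : Tendsto (fun t : ℝ => Real.log (1 / t)) (nhdsWithin 0 (Ioi 0)) atTop := by
    have h0 : Tendsto (fun t : ℝ => 1 / t) (nhdsWithin 0 (Ioi 0)) atTop := by
      simpa [one_div] using (tendsto_inv_nhdsGT_zero (𝕜 := ℝ))
    exact Real.tendsto_log_atTop.comp h0
  have hg0 : Tendsto (fun t : ℝ => 2 / Real.log (1 / t)) (nhdsWithin 0 (Ioi 0)) (nhds 0) := by
    have h1 := hlog.inv_tendsto_atTop
    have h2 := h1.const_mul (2:ℝ)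
    simpa [div_eq_mul_inv] using h2
  have key : Tendsto
      (fun t : ℝ => (μ {ω | E ω * F ω < t}).toReal / (t * Real.log (1 / t)) - 1)
      (nhdsWithin 0 (Ioi 0)) (nhds 0) := by
    refine squeeze_zero_norm' ?_ hg0
    filter_upwards [Ioo_mem_nhdsGT_of_mem
      (by constructor <;> norm_num : (0:ℝ) ∈ Ico (0:ℝ) 1)] with t ht
    have ht0 : (0:ℝ) < t := ht.1
    have hlogpos : 0 < Real.log (1 / t) := Real.log_pos (one_lt_one_div ht.1 ht.2)
    have hd : 0 < t * Real.log (1 / t) := mul_pos ht0 hlogpos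
    have hb := hbound t ht
    rw [Real.norm_eq_abs, div_sub_one hd.ne', abs_div, abs_of_pos hd]
    calc |(μ {ω | E ω * F ω < t}).toReal - t * Real.log (1 / t)| / (t * Real.log (1 / t))
        ≤ (2 * t) / (t * Real.log (1 / t)) := by gcongr
      _ = 2 / Real.log (1 / t) := by
          rw [mul_comm 2 t, mul_div_mul_left _ _ ht0.ne']
  have final := key.add (tendsto_const_nhds (x := (1:ℝ)))
  simpa using final
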